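/- Let M ≥ 3 be an integer and let M̂ be the (M−2)×(M−2) tridiagonal matrix with zero diagonal, superdiagonal entries M̂_{i,i+1} = i + 2 for i = 1, ..., M−3, and subdiagonal entries M̂_{i+1,i} = 1. If λ is a real root of Ĥe_{M−2}, then the vector v ∈ ℝ^{M−2} with entries v_i = Ĥe_{i−1}(λ)/(i+1)! for i = 1, ..., M−2 satisfies M̂·v = λ·v; in particular, every root of Ĥe_{M−2} is an eigenvalue of M̂. -/

import Mathlib

open Polynomial Matrix

/-- Modified Hermite-type polynomials: Ĥe₀ = 1, Ĥe₁ = x,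
    Ĥe_{k+1} = x·Ĥe_k − (k+2)·Ĥe_{k−1} for k ≥ 1. -/
noncomputable def Hhat : ℕ → Polynomial ℝ
  | 0 => 1
  | 1 => Polynomial.X
  | (n + 2) => Polynomial.X * Hhat (n + 1) - Polynomial.C ((n : ℝ) + 3) * Hhat n

/-- The (M−2)×(M−2) tridiagonal matrix M̂ with zero diagonal, superdiagonal
    entries 3, 4, ..., M−1 and subdiagonal entries 1. -/
def triMhat (M : ℕ) : Matrix (Fin (M - 2)) (Fin (M - 2)) ℝ :=
  Matrix.of fun i j =>
    if (j : ℕ) = (i : ℕ) + 1 then ((i : ℕ) : ℝ) + 3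
    else if (i : ℕ) = (j : ℕ) + 1 then 1 else 0

lemma sum_ite_val {N : ℕ} (k : ℕ) (f : Fin N → ℝ) :
    ∑ j : Fin N, (if (j:ℕ) = k then f j else 0) = if h : k < N then f ⟨k,h⟩ else 0 := by
  split
  · next h =>
    rw [Finset.sum_eq_single (⟨k, h⟩ : Fin N)]
    · simp
    · intro j _ hj
      simp [Fin.ext_iff] at hj ⊢
      intro hc; exact absurd hc hj
    · simp
  · next h =>
    apply Finset.sum_eq_zero
    intro j _
    have := j.isLt
    simp only [ite_eq_right_iff]
    intro hc; omega

lemma Hhat_rec (n : ℕ) (lam : ℝ) :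
    (Hhat (n+2)).eval lam = lam * (Hhat (n+1)).eval lam - ((n:ℝ)+3) * (Hhat n).eval lam := by
  simp [Hhat]

/-- If λ is a root of Ĥe_{M−2} then v with vᵢ = Ĥe_{i−1}(λ)/(i+1)! (1-based)
    is an eigenvector of M̂ with eigenvalue λ. -/
theorem eigenvector_triMhat (M : ℕ) (hM : 3 ≤ M) (lam : ℝ)
    (hroot : (Hhat (M - 2)).eval lam = 0) :
    (triMhat M).mulVec
        (fun i => (Hhat (i : ℕ)).eval lam / (Nat.factorial ((i : ℕ) + 2) : ℝ))
      = lam • (fun i : Fin (M - 2) =>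
          (Hhat (i : ℕ)).eval lam / (Nat.factorial ((i : ℕ) + 2) : ℝ)) := by
  set N := M - 2 with hNdef
  have hN : 1 ≤ N := by omega
  funext i
  set v : ℕ → ℝ := fun k => (Hhat k).eval lam / (Nat.factorial (k + 2) : ℝ) with hv
  simp only [Matrix.mulVec, dotProduct, triMhat, Matrix.of_apply, Pi.smul_apply,
    smul_eq_mul]
  have hsplit : ∀ j : Fin N,
      (if (j:ℕ) = (i:ℕ) + 1 then ((i:ℕ):ℝ) + 3 else if (i:ℕ) = (j:ℕ) + 1 then 1 else 0) *
        ((Hhat (j:ℕ)).eval lam / (Nat.factorial ((j:ℕ)+2) : ℝ))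
      = (if (j:ℕ) = (i:ℕ)+1 then (((i:ℕ):ℝ)+3) * v (j:ℕ) else 0)
        + (if (j:ℕ) = (i:ℕ)-1 then (if (i:ℕ) = 0 then 0 else v (j:ℕ)) else 0) := by
    intro j
    simp only [hv]
    split_ifs <;> first | (exfalso; omega) | ring1
  rw [Finset.sum_congr rfl (fun j _ => hsplit j), Finset.sum_add_distrib, sum_ite_val,
    sum_ite_val]
  have hilt : (i:ℕ) < N := i.isLt
  have hfac : ∀ k : ℕ, ((Nat.factorial k : ℝ)) ≠ 0 :=
    fun k => Nat.cast_ne_zero.mpr (Nat.factorial_ne_zero k)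
  rcases Nat.eq_zero_or_pos (i:ℕ) with h0 | h1
  · -- i = 0
    rcases eq_or_lt_of_le hN with hN1 | hN2
    · -- N = 1
      have : ¬ ((i:ℕ) + 1 < N) := by omega
      rw [dif_neg this, dif_pos (by omega : (i:ℕ) - 1 < N)]
      have hl : lam = 0 := by
        have : (Hhat N).eval lam = 0 := hroot
        rw [← hN1] at this
        simpa [Hhat] using this
      simp [h0, hl]
    · -- N ≥ 2
      rw [dif_pos (by omega : (i:ℕ) + 1 < N), dif_pos (by omega : (i:ℕ) - 1 < N)]
      simp only [h0, hv, Hhat]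
      norm_num [Nat.factorial]
      ring
  · -- i ≥ 1
    obtain ⟨k, hk⟩ : ∃ k, (i:ℕ) = k + 1 := ⟨(i:ℕ) - 1, by omega⟩
    have hrec := Hhat_rec k lam
    rcases eq_or_lt_of_le (by omega : (i:ℕ) + 1 ≤ N) with hlast | hmid
    · -- last row: i + 1 = N
      have : ¬ ((i:ℕ) + 1 < N) := by omega
      rw [dif_neg this, dif_pos (by omega : (i:ℕ) - 1 < N)]
      have hz : (Hhat (k+2)).eval lam = 0 := by
        rw [show k + 2 = N by omega]; exact hroot
      rw [hrec] at hz
      simp only [hv, hk, if_neg (by omega : ¬ (k + 1 = 0))]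
      have h1 : k + 1 - 1 = k := by omega
      rw [h1]
      have e1 : (Nat.factorial (k+1+2) : ℝ) = ((k:ℝ)+3) * (Nat.factorial (k+2) : ℝ) := by
        rw [show k+1+2 = (k+2)+1 from rfl, Nat.factorial_succ]; push_cast; ring
      rw [e1]
      field_simp
      linear_combination (-1 : ℝ) * hz
    · -- middle row
      rw [dif_pos hmid, dif_pos (by omega : (i:ℕ) - 1 < N)]
      simp only [hv, hk, if_neg (by omega : ¬ (k + 1 = 0))]
      have h1 : k + 1 - 1 = k := by omega
      have h2 : k + 1 + 1 = k + 2 := rfl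
      rw [h1, h2]
      have e1 : (Nat.factorial (k+2+2) : ℝ) = ((k:ℝ)+4) * (Nat.factorial (k+3) : ℝ) := by
        rw [show k+2+2 = (k+3)+1 from rfl, Nat.factorial_succ]; push_cast; ring
      have e2 : (Nat.factorial (k+1+2) : ℝ) = ((k:ℝ)+3) * (Nat.factorial (k+2) : ℝ) := by
        rw [show k+1+2 = (k+2)+1 from rfl, Nat.factorial_succ]; push_cast; ring
      rw [e1, e2, hrec]
      push_cast
      have hne2 := hfac (k+2)
      have hne3 := hfac (k+3)
      field_simp
      ring
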